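/- arXiv:1301.1918 — 2 statements merged into one kernel-verified Lean document; each statement's English description precedes it below -/
import Mathlib

section
/- Let q be a prime power, let k, n, d be positive integers with d ≤ k and 2k ≤ n, and let C ⊆ F_q^{k×(n−k)} be an MRD code with minimum rank distance d (so |C| = q^{(n−k)(k−d+1)}). Then lift(C) = {row space of [I_k | A] : A ∈ C} is a constant dimension code in the Grassmannian G_q(k,n) with minimum injection distance d, and |lift(C)| = q^{(n−k)(k−d+1)}. -/
open Matrix Module

/-- The row space of a matrix, i.e. the span of its rows. -/
noncomputable def rowSpace (F : Type) [Field F] {k n : ℕ}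
    (M : Matrix (Fin k) (Fin n) F) : Submodule F (Fin n → F) :=
  Submodule.span F (Set.range M)

/-- The block matrix `[0_{k×l} | I_k | M]` of size `k × n`,
where `M` has size `k × (n - k - l)`. -/
def paddedLift (F : Type) [Field F] (k n l : ℕ)
    (M : Matrix (Fin k) (Fin (n - k - l)) F) : Matrix (Fin k) (Fin n) F :=
  fun i j =>
    if (j : ℕ) < l then 0
    else if h : (j : ℕ) < l + k then (if (j : ℕ) = l + (i : ℕ) then 1 else 0)
    else M i ⟨(j : ℕ) - (l + k), by have := j.isLt; omega⟩

section Aux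

variable {F : Type} [Field F] {k n : ℕ}

/-- the "extension" function for the lift -/
def efAux (M : Matrix (Fin k) (Fin (n - k)) F) (c : Fin k → F) : Fin n → F :=
  fun j => if h : (j : ℕ) < k then c ⟨j, h⟩
    else (c ᵥ* M) ⟨(j : ℕ) - k, by have := j.isLt; omega⟩

lemma vecMul_paddedLift (M : Matrix (Fin k) (Fin (n - k)) F) (c : Fin k → F) :
    c ᵥ* paddedLift F k n 0 M = efAux M c := by
  funext j
  simp only [Matrix.vecMul, dotProduct, efAux]
  by_cases h : (j : ℕ) < k
  · rw [dif_pos h]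
    rw [Finset.sum_eq_single (⟨(j : ℕ), h⟩ : Fin k)]
    · simp [paddedLift, h]
    · intro b _ hb
      have hne : (j : ℕ) ≠ (b : ℕ) := fun hc => hb (Fin.ext hc.symm)
      simp [paddedLift, h, hne]
    · intro h'; exact absurd (Finset.mem_univ _) h'
  · rw [dif_neg h]
    apply Finset.sum_congr rfl
    intro i _
    congr 1
    simp only [paddedLift]
    rw [if_neg (by omega), dif_neg (by omega)]
    congr 1
    apply Fin.ext
    simp

lemma mem_rowSpace_paddedLift (M : Matrix (Fin k) (Fin (n - k)) F) (x : Fin n → F) :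
    x ∈ rowSpace F (paddedLift F k n 0 M) ↔ ∃ c : Fin k → F, efAux M c = x := by
  rw [rowSpace]
  change x ∈ Submodule.span F (Set.range (paddedLift F k n 0 M).row) ↔ _
  rw [← range_vecMulLinear]
  constructor
  · rintro ⟨c, rfl⟩; exact ⟨c, (vecMul_paddedLift M c).symm⟩
  · rintro ⟨c, rfl⟩; exact ⟨c, vecMul_paddedLift M c⟩

lemma efAux_head (hkn : k ≤ n) (M : Matrix (Fin k) (Fin (n - k)) F) (c : Fin k → F)
    (i : Fin k) : efAux M c ⟨(i : ℕ), lt_of_lt_of_le i.isLt hkn⟩ = c i := by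
  simp [efAux, i.isLt]

lemma efAux_tail (hkn : k ≤ n) (M : Matrix (Fin k) (Fin (n - k)) F) (c : Fin k → F)
    (t : Fin (n - k)) :
    efAux M c ⟨k + (t : ℕ), by have := t.isLt; omega⟩ = (c ᵥ* M) t := by
  have h : ¬ (k + (t : ℕ) < k) := by omega
  simp only [efAux, dif_neg h]
  congr 1
  apply Fin.ext
  simp

lemma vecMulLinear_paddedLift_injective (hkn : k ≤ n)
    (M : Matrix (Fin k) (Fin (n - k)) F) :
    Function.Injective (paddedLift F k n 0 M).vecMulLinear := by
  intro c c' h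
  funext i
  have := congrFun h ⟨(i : ℕ), lt_of_lt_of_le i.isLt hkn⟩
  simpa [Matrix.vecMulLinear_apply, vecMul_paddedLift, efAux_head hkn] using this

lemma finrank_rowSpace_paddedLift (hkn : k ≤ n) (M : Matrix (Fin k) (Fin (n - k)) F) :
    finrank F ↥(rowSpace F (paddedLift F k n 0 M)) = k := by
  have : rowSpace F (paddedLift F k n 0 M)
      = LinearMap.range (paddedLift F k n 0 M).vecMulLinear :=
    (range_vecMulLinear _).symm
  rw [this, LinearMap.finrank_range_of_inj (vecMulLinear_paddedLift_injective hkn M)]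
  simp

lemma inter_rowSpace_paddedLift (hkn : k ≤ n) (A B : Matrix (Fin k) (Fin (n - k)) F) :
    rowSpace F (paddedLift F k n 0 A) ⊓ rowSpace F (paddedLift F k n 0 B)
      = Submodule.map (paddedLift F k n 0 A).vecMulLinear
          (LinearMap.ker (A - B).vecMulLinear) := by
  ext x
  simp only [Submodule.mem_inf, mem_rowSpace_paddedLift, Submodule.mem_map,
    LinearMap.mem_ker, Matrix.vecMulLinear_apply]
  constructor
  · rintro ⟨⟨c, rfl⟩, ⟨c', hc'⟩⟩
    have hcc : c' = c := by
      funext i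
      have := congrFun hc' ⟨(i : ℕ), lt_of_lt_of_le i.isLt hkn⟩
      rwa [efAux_head hkn, efAux_head hkn] at this
    subst hcc
    refine ⟨c', ?_, vecMul_paddedLift A c'⟩
    rw [Matrix.vecMul_sub]
    funext t
    have := congrFun hc' ⟨k + (t : ℕ), by have := t.isLt; omega⟩
    rw [efAux_tail hkn, efAux_tail hkn] at this
    simp [this]
  · rintro ⟨c, hc, rfl⟩
    rw [Matrix.vecMul_sub, sub_eq_zero] at hc
    rw [vecMul_paddedLift]
    refine ⟨⟨c, rfl⟩, ⟨c, ?_⟩⟩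
    funext j
    simp only [efAux]
    split
    · rfl
    · rw [hc]

lemma finrank_range_vecMulLinear (M : Matrix (Fin k) (Fin (n - k)) F) :
    finrank F ↥(LinearMap.range M.vecMulLinear) = M.rank := by
  rw [← Matrix.mulVecLin_transpose, ← Matrix.rank_transpose M]
  rfl

lemma finrank_inter_paddedLift (hkn : k ≤ n) (A B : Matrix (Fin k) (Fin (n - k)) F) :
    finrank F ↥(rowSpace F (paddedLift F k n 0 A) ⊓ rowSpace F (paddedLift F k n 0 B))
      = k - (A - B).rank := by
  rw [inter_rowSpace_paddedLift hkn A B]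
  rw [← LinearEquiv.finrank_eq (Submodule.equivMapOfInjective _
    (vecMulLinear_paddedLift_injective hkn A) (LinearMap.ker (A - B).vecMulLinear))]
  have hrn := LinearMap.finrank_range_add_finrank_ker (A - B).vecMulLinear
  rw [finrank_range_vecMulLinear] at hrn
  have hk : finrank F (Fin k → F) = k := by simp
  omega

lemma rank_le_k (A : Matrix (Fin k) (Fin (n - k)) F) : A.rank ≤ k := by
  simpa using A.rank_le_card_height

lemma paddedLift_rowSpace_injective (hkn : k ≤ n) :
    Function.Injective (fun M : Matrix (Fin k) (Fin (n - k)) F =>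
      rowSpace F (paddedLift F k n 0 M)) := by
  intro A B h
  replace h : rowSpace F (paddedLift F k n 0 A) = rowSpace F (paddedLift F k n 0 B) := h
  ext i t
  have hrow : efAux A (Pi.single i 1) ∈ rowSpace F (paddedLift F k n 0 B) := by
    rw [← h, mem_rowSpace_paddedLift]; exact ⟨_, rfl⟩
  rw [mem_rowSpace_paddedLift] at hrow
  obtain ⟨c, hc⟩ := hrow
  have hcc : c = Pi.single i 1 := by
    funext j
    have := congrFun hc ⟨(j : ℕ), lt_of_lt_of_le j.isLt hkn⟩
    rwa [efAux_head hkn, efAux_head hkn] at this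
  subst hcc
  have := congrFun hc ⟨k + (t : ℕ), by have := t.isLt; omega⟩
  rw [efAux_tail hkn, efAux_tail hkn, Matrix.single_one_vecMul, Matrix.single_one_vecMul] at this
  exact this.symm

end Aux

/-- A rank-metric code `C` has minimum rank distance `d`. -/
def HasMinRankDist (F : Type) [Field F] {m n : ℕ}
    (C : Set (Matrix (Fin m) (Fin n) F)) (d : ℕ) : Prop :=
  (∀ A ∈ C, ∀ B ∈ C, A ≠ B → d ≤ (A - B).rank) ∧
  ∃ A ∈ C, ∃ B ∈ C, A ≠ B ∧ (A - B).rank = d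

/-- A rank-metric code is MRD if it has minimum rank distance `d` and attains
the Singleton-like bound. -/
def IsMRD (F : Type) [Field F] [Fintype F] {m n : ℕ}
    (C : Set (Matrix (Fin m) (Fin n) F)) (d : ℕ) : Prop :=
  HasMinRankDist F C d ∧
  Nat.card C = (Fintype.card F) ^ (max n m * (min n m - d + 1))

/-- A constant dimension code `𝒞` of dimension `k` has minimum injection distance `d`. -/
def HasMinInjDist (F : Type) [Field F] {n : ℕ} (k : ℕ)
    (𝒞 : Set (Submodule F (Fin n → F))) (d : ℕ) : Prop :=
  (∀ U ∈ 𝒞, ∀ V ∈ 𝒞, U ≠ V → d ≤ k - finrank F ↥(U ⊓ V)) ∧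
  ∃ U ∈ 𝒞, ∃ V ∈ 𝒞, U ≠ V ∧ k - finrank F ↥(U ⊓ V) = d

/-- **Lifted MRD codes are constant dimension codes.**
If `C ⊆ F_q^{k×(n−k)}` is an MRD code with minimum rank distance `d` (`d ≤ k`,
`2k ≤ n`), then `lift(C)` is a constant dimension code in `G_q(k,n)` with
minimum injection distance `d` and `|lift(C)| = q^{(n−k)(k−d+1)}`. -/
theorem lifted_MRD_code
    (q : ℕ) (F : Type) [Field F] [Fintype F] (hq : Fintype.card F = q)
    (k n d : ℕ) (hk : 0 < k) (hn : 0 < n) (hd : 0 < d)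
    (hdk : d ≤ k) (h2k : 2 * k ≤ n)
    (C : Set (Matrix (Fin k) (Fin (n - k)) F)) (hC : IsMRD F C d) :
    (∀ U ∈ (fun M => rowSpace F (paddedLift F k n 0 M)) '' C, finrank F ↥U = k) ∧
    HasMinInjDist F k ((fun M => rowSpace F (paddedLift F k n 0 M)) '' C) d ∧
    Nat.card ((fun M => rowSpace F (paddedLift F k n 0 M)) '' C)
      = q ^ ((n - k) * (k - d + 1)) := by
  have hkn : k ≤ n := by omega
  have hinj := paddedLift_rowSpace_injective (F := F) hkn
  have hdist : ∀ A B : Matrix (Fin k) (Fin (n - k)) F,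
      k - finrank F ↥(rowSpace F (paddedLift F k n 0 A) ⊓ rowSpace F (paddedLift F k n 0 B))
        = (A - B).rank := by
    intro A B
    rw [finrank_inter_paddedLift hkn A B]
    have := rank_le_k (A - B)
    omega
  refine ⟨?_, ⟨?_, ?_⟩, ?_⟩
  · rintro U ⟨M, _, rfl⟩
    exact finrank_rowSpace_paddedLift hkn M
  · rintro U ⟨A, hA, rfl⟩ V ⟨B, hB, rfl⟩ hUV
    have hAB : A ≠ B := fun h => hUV (by rw [h])
    rw [hdist A B]
    exact hC.1.1 A hA B hB hAB
  · obtain ⟨A, hA, B, hB, hAB, hrank⟩ := hC.1.2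
    refine ⟨_, ⟨A, hA, rfl⟩, _, ⟨B, hB, rfl⟩, fun h => hAB (hinj h), ?_⟩
    rw [hdist A B, hrank]
  · have hcard := Nat.card_image_of_injective hinj C
    refine hcard.trans ?_
    rw [hC.2, hq]
    congr 1
    have h1 : max (n - k) k = n - k := by omega
    have h2 : min (n - k) k = k := by omega
    rw [h1, h2]
end

section
/- Let q be a prime power and let k, n be positive integers with 2k ≤ n, and write n ≡ r (mod k) with 0 ≤ r < k. For each j = 0, …, ⌊(n−k)/k⌋, let C_j ⊆ F_q^{k×(n−k−jk)} be an MRD code with minimum rank distance k when n − jk − k ≥ k, and a single matrix otherwise; let 𝒞_j = { row space of [0_{k×jk} | I_k | M] : M ∈ C_j }, and 𝒞 = ⋃_j 𝒞_j. Then |𝒞| = (q^n − q^{r+k})/(q^k − 1) + 1. -/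
open Matrix Module

section Aux
variable (F : Type) [Field F]

lemma combo_apply {k n l : ℕ} (M : Matrix (Fin k) (Fin (n - k - l)) F)
    (c : Fin k → F) (j : Fin n) :
    (∑ i, c i • paddedLift F k n l M i) j = ∑ i, c i * paddedLift F k n l M i j := by
  simp [Finset.sum_apply]

lemma combo_lt {k n l : ℕ} (M : Matrix (Fin k) (Fin (n - k - l)) F)
    (c : Fin k → F) (j : Fin n) (h : (j : ℕ) < l) :
    (∑ i, c i • paddedLift F k n l M i) j = 0 := by
  rw [combo_apply]
  simp [paddedLift, h]

lemma combo_mid {k n l : ℕ} (M : Matrix (Fin k) (Fin (n - k - l)) F)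
    (c : Fin k → F) (t : Fin k) (h : l + (t : ℕ) < n) :
    (∑ i, c i • paddedLift F k n l M i) ⟨l + (t : ℕ), h⟩ = c t := by
  rw [combo_apply]
  have : ∀ i : Fin k, paddedLift F k n l M i ⟨l + (t : ℕ), h⟩ = if t = i then 1 else 0 := by
    intro i
    have ht := t.isLt
    simp only [paddedLift]
    rw [if_neg (by omega), dif_pos (by omega)]
    by_cases hti : t = i
    · subst hti; simp
    · rw [if_neg (fun H => hti (Fin.ext (by omega : (t:ℕ) = i))), if_neg hti]
  simp [this]

lemma combo_right {k n l : ℕ} (M : Matrix (Fin k) (Fin (n - k - l)) F)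
    (c : Fin k → F) (s : Fin (n - k - l)) (h : l + k + (s : ℕ) < n) :
    (∑ i, c i • paddedLift F k n l M i) ⟨l + k + (s : ℕ), h⟩ = ∑ i, c i * M i s := by
  rw [combo_apply]
  have : ∀ i : Fin k, paddedLift F k n l M i ⟨l + k + (s : ℕ), h⟩ = M i s := by
    intro i
    simp only [paddedLift]
    rw [if_neg (by omega), dif_neg (by omega)]
    congr 1
    exact Fin.ext (show l + k + (s:ℕ) - (l + k) = (s:ℕ) by omega)
  simp [this]
end Aux

section Inj
variable (F : Type) [Field F]

lemma paddedLift_mid {k n l : ℕ} (M : Matrix (Fin k) (Fin (n - k - l)) F)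
    (i t : Fin k) (h : l + (t : ℕ) < n) :
    paddedLift F k n l M i ⟨l + (t : ℕ), h⟩ = if t = i then 1 else 0 := by
  have ht := t.isLt
  simp only [paddedLift]
  rw [if_neg (by omega), dif_pos (by omega)]
  by_cases hti : t = i
  · subst hti; simp
  · rw [if_neg (fun H => hti (Fin.ext (by omega : (t:ℕ) = i))), if_neg hti]

lemma mem_rowSpace_iff {k n l : ℕ} (M : Matrix (Fin k) (Fin (n - k - l)) F)
    (v : Fin n → F) :
    v ∈ rowSpace F (paddedLift F k n l M) ↔
      ∃ c : Fin k → F, ∑ i, c i • paddedLift F k n l M i = v :=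
  Submodule.mem_span_range_iff_exists_fun F

lemma rowSpace_ne_of_lt {k n l l' : ℕ} (hk : 0 < k) (hln : l + k ≤ n) (hll : l < l')
    (M : Matrix (Fin k) (Fin (n - k - l)) F) (M' : Matrix (Fin k) (Fin (n - k - l')) F) :
    rowSpace F (paddedLift F k n l M) ≠ rowSpace F (paddedLift F k n l' M') := by
  intro h
  have hmem : paddedLift F k n l M ⟨0, hk⟩ ∈ rowSpace F (paddedLift F k n l' M') := by
    rw [← h]; exact Submodule.subset_span (Set.mem_range_self _)
  rw [mem_rowSpace_iff] at hmem
  obtain ⟨c, hc⟩ := hmem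
  have h1 := congrFun hc ⟨l, by omega⟩
  rw [combo_lt F M' c _ hll] at h1
  have h2 : paddedLift F k n l M ⟨0, hk⟩ ⟨l, by omega⟩ = 1 := by
    have := paddedLift_mid F M ⟨0, hk⟩ ⟨0, hk⟩ (by omega : l + ((⟨0,hk⟩ : Fin k) : ℕ) < n)
    simpa using this
  exact zero_ne_one (h1.trans h2)

lemma eq_of_rowSpace_le {k n l : ℕ} (hln : l + k ≤ n)
    (M M' : Matrix (Fin k) (Fin (n - k - l)) F)
    (h : rowSpace F (paddedLift F k n l M') ≤ rowSpace F (paddedLift F k n l M)) :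
    M' = M := by
  ext i s
  have hmem : paddedLift F k n l M' i ∈ rowSpace F (paddedLift F k n l M) :=
    h (Submodule.subset_span (Set.mem_range_self _))
  rw [mem_rowSpace_iff] at hmem
  obtain ⟨c, hc⟩ := hmem
  have hct : ∀ t : Fin k, c t = if t = i then 1 else 0 := by
    intro t
    have h1 := congrFun hc ⟨l + (t : ℕ), by have := t.isLt; omega⟩
    rw [combo_mid, paddedLift_mid] at h1
    exact h1
  have hs : l + k + (s : ℕ) < n := by have := s.isLt; omega
  have h2 := congrFun hc ⟨l + k + (s : ℕ), hs⟩
  rw [combo_right] at h2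
  have h3 : paddedLift F k n l M' i ⟨l + k + (s : ℕ), hs⟩ = M' i s := by
    simp only [paddedLift]
    rw [if_neg (by omega), dif_neg (by omega)]
    congr 1
    exact Fin.ext (show l + k + (s:ℕ) - (l + k) = (s:ℕ) by omega)
  rw [h3] at h2
  rw [← h2]
  simp [hct, Finset.sum_ite_eq]
end Inj

lemma geom_sum_aux (q : ℚ) (k n : ℕ) :
    ∀ t : ℕ, t * k + k ≤ n →
      (q ^ k - 1) * ∑ j ∈ Finset.range t, q ^ (n - k - j * k)
        = q ^ n - q ^ (n - t * k) := by
  intro t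
  induction t with
  | zero => simp
  | succ t ih =>
    intro ht
    have he : (t + 1) * k = t * k + k := by ring
    have h1 : t * k + k ≤ n := by omega
    rw [Finset.sum_range_succ, mul_add, ih h1]
    have e1 : k + (n - k - t * k) = n - t * k := by omega
    have e2 : n - (t + 1) * k = n - k - t * k := by omega
    rw [sub_mul, one_mul, ← pow_add, e1, e2]
    ring


set_option maxHeartbeats 2000000 in
/-- **Cardinality of multi-component lifted MRD codes in the case `d = k`.**
With `n ≡ r (mod k)`, `0 ≤ r < k`, the multi-component code built from MRD
codes of minimum rank distance `k` has cardinality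
`(q^n − q^{r+k})/(q^k − 1) + 1`. -/
theorem multi_component_cardinality_d_eq_k
    (q : ℕ) (F : Type) [Field F] [Fintype F] (hq : Fintype.card F = q)
    (k n : ℕ) (hk : 0 < k) (hn : 0 < n) (h2k : 2 * k ≤ n)
    (C : ∀ j : ℕ, Set (Matrix (Fin k) (Fin (n - k - j * k)) F))
    (hC : ∀ j ≤ (n - k) / k,
      if k ≤ n - j * k - k then IsMRD F (C j) k else ∃ M, C j = {M}) :
    (Nat.card {U : Submodule F (Fin n → F) | ∃ j ≤ (n - k) / k, ∃ M ∈ C j,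
        U = rowSpace F (paddedLift F k n (j * k) M)} : ℚ)
      = ((q : ℚ) ^ n - (q : ℚ) ^ (n % k + k)) / ((q : ℚ) ^ k - 1) + 1 := by
  set m := n / k with hm
  set r := n % k with hr
  have hd : k * m + r = n := Nat.div_add_mod n k
  have hcomm : k * m = m * k := Nat.mul_comm _ _
  have hrk : r < k := Nat.mod_lt _ hk
  have hm2 : 2 ≤ m := (Nat.le_div_iff_mul_le hk).2 h2k
  have hmk : m * k ≤ n := by omega
  have hsub : (m - 1) * k = m * k - k := by rw [Nat.sub_mul, one_mul]
  have hJ : (n - k) / k = m - 1 := by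
    have e : n - k = r + (m - 1) * k := by omega
    rw [e, Nat.add_mul_div_right _ _ hk, Nat.div_eq_of_lt hrk, Nat.zero_add]
  have hjk : ∀ j : ℕ, j < m → j * k + k ≤ n := by
    intro j hj
    have h1 : (j + 1) * k ≤ m * k := Nat.mul_le_mul_right k hj
    have h2 : (j + 1) * k = j * k + k := by ring
    omega
  -- the indexing map
  haveI : ∀ j : ℕ, Fintype (C j) := fun j => Set.Finite.fintype (Set.toFinite _)
  let g : (Σ j : Fin m, C (j : ℕ)) → Submodule F (Fin n → F) :=
    fun p => rowSpace F (paddedLift F k n ((p.1 : ℕ) * k) p.2.1)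
  have hginj : Function.Injective g := by
    rintro ⟨j, M⟩ ⟨j', M'⟩ hg
    simp only [g] at hg
    have hjj : j = j' := by
      by_contra hne
      rcases Nat.lt_or_ge (j : ℕ) (j' : ℕ) with hlt | hge
      · exact rowSpace_ne_of_lt F (k := k) (n := n) (l := (j:ℕ)*k) (l' := (j':ℕ)*k) hk
          (hjk _ j.isLt) ((Nat.mul_lt_mul_right hk).2 hlt) M.1 M'.1 hg
      · have hlt : (j' : ℕ) < (j : ℕ) := by
          rcases Nat.lt_or_ge (j' : ℕ) (j : ℕ) with h | h
          · exact h
          · exact absurd (Fin.ext (le_antisymm h hge)) hne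
        exact rowSpace_ne_of_lt F (k := k) (n := n) (l := (j':ℕ)*k) (l' := (j:ℕ)*k) hk
          (hjk _ j'.isLt) ((Nat.mul_lt_mul_right hk).2 hlt) M'.1 M.1 hg.symm
    subst hjj
    have hMM : M.1 = M'.1 :=
      eq_of_rowSpace_le F (k := k) (n := n) (l := (j:ℕ)*k) (hjk _ j.isLt) M'.1 M.1 hg.le
    exact Sigma.ext rfl (heq_of_eq (Subtype.ext hMM))
  have hset : {U : Submodule F (Fin n → F) | ∃ j ≤ (n - k) / k, ∃ M ∈ C j,
      U = rowSpace F (paddedLift F k n (j * k) M)} = Set.range g := by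
    ext U
    simp only [Set.mem_setOf_eq, Set.mem_range]
    constructor
    · rintro ⟨j, hj, M, hM, rfl⟩
      rw [hJ] at hj
      exact ⟨⟨⟨j, by omega⟩, ⟨M, hM⟩⟩, rfl⟩
    · rintro ⟨⟨j, M⟩, rfl⟩
      exact ⟨(j : ℕ), by rw [hJ]; have := j.isLt; omega, M.1, M.2, rfl⟩
  have hcard : Nat.card {U : Submodule F (Fin n → F) | ∃ j ≤ (n - k) / k, ∃ M ∈ C j,
      U = rowSpace F (paddedLift F k n (j * k) M)} = ∑ j : Fin m, Nat.card (C (j : ℕ)) := by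
    rw [hset, Nat.card_range_of_injective hginj, Nat.card_eq_fintype_card,
      Fintype.card_sigma]
    simp [Nat.card_eq_fintype_card]
  -- cardinalities of the components
  have hCj : ∀ j : ℕ, j < m - 1 → Nat.card (C j) = q ^ (n - k - j * k) := by
    intro j hj
    have h := hC j (by omega)
    have h2 : (j + 2) * k ≤ m * k := Nat.mul_le_mul_right k (by omega)
    have h3 : (j + 2) * k = j * k + 2 * k := by ring
    have hcond : k ≤ n - j * k - k := by omega
    rw [if_pos hcond] at h
    rw [h.2, hq]
    congr 1
    have h1 : k ≤ n - k - j * k := by omega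
    rw [max_eq_left h1, min_eq_right h1]
    have : k - k + 1 = 1 := by omega
    rw [this, mul_one]
  have hClast : Nat.card (C (m - 1)) = 1 := by
    have h := hC (m - 1) (by omega)
    have hcond : ¬ k ≤ n - (m - 1) * k - k := by omega
    rw [if_neg hcond] at h
    obtain ⟨M0, hM0⟩ := h
    rw [hM0]
    simp
  -- sum up
  have hsum : ∑ j : Fin m, Nat.card (C (j : ℕ))
      = (∑ j ∈ Finset.range (m - 1), q ^ (n - k - j * k)) + 1 := by
    rw [Fin.sum_univ_eq_sum_range (fun j => Nat.card (C j)) m]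
    have hm1 : m = (m - 1) + 1 := by omega
    rw [hm1, Finset.sum_range_succ, ← hm1, hClast]
    congr 1
    exact Finset.sum_congr rfl fun j hj => hCj j (Finset.mem_range.mp hj)
  rw [hcard, hsum]
  push_cast
  -- the geometric series
  have hq2 : 2 ≤ q := hq ▸ Fintype.one_lt_card
  have hx1 : (1 : ℚ) < (q : ℚ) ^ k := one_lt_pow₀ (by exact_mod_cast hq2) hk.ne'
  have hxne : ((q : ℚ) ^ k - 1) ≠ 0 := by linarith
  have hg := geom_sum_aux (q : ℚ) k n (m - 1) (by omega)
  have he : n - (m - 1) * k = r + k := by omega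
  rw [he] at hg
  have : (∑ j ∈ Finset.range (m - 1), (q : ℚ) ^ (n - k - j * k))
      = ((q : ℚ) ^ n - (q : ℚ) ^ (r + k)) / ((q : ℚ) ^ k - 1) := by
    rw [eq_div_iff hxne, mul_comm]
    exact hg
  rw [this]
end
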